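/- With p_n = P(N(n,s) < n), one has E[N(n,s)] ≤ p_n·(Σ_{k=1}^n F_k(t) − (s − E[S_{A(n,s)}])/t) + n·(1 − p_n), where t = t(n,s). -/

import Mathlib

open MeasureTheory ProbabilityTheory Finset Set
open scoped Classical

/-- Two downward-closed finsets (w.r.t. a strict total relation) of equal
cardinality coincide. -/
lemma brs_initseg_unique {ι : Type*} {r : ι → ι → Prop}
    (htot : ∀ i j, i ≠ j → r i j ∨ r j i)
    (hasym : ∀ i j, r i j → ¬ r j i)
    {B C : Finset ι}
    (hB : ∀ i ∈ B, ∀ j, r j i → j ∈ B)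
    (hC : ∀ i ∈ C, ∀ j, r j i → j ∈ C)
    (hcard : B.card = C.card) : B = C := by
  by_contra hne
  have hBC : ¬ B ⊆ C := fun h => hne (Finset.eq_of_subset_of_card_le h hcard.ge)
  have hCB : ¬ C ⊆ B := fun h => hne ((Finset.eq_of_subset_of_card_le h hcard.le).symm)
  obtain ⟨i, hiB, hiC⟩ := Finset.not_subset.1 hBC
  obtain ⟨j, hjC, hjB⟩ := Finset.not_subset.1 hCB
  have hij : i ≠ j := fun h => hiC (h ▸ hjC)
  rcases htot i j hij with h | h
  · exact hiC (hC j hjC i h)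
  · exact hjB (hB i hiB j h)

/-- A finite supremum of measurable `ℕ`-valued functions is measurable. -/
lemma brs_measurable_sup {ι Ω' : Type*} [MeasurableSpace Ω'] (S : Finset ι)
    (g : ι → Ω' → ℕ) (hg : ∀ i, Measurable (g i)) :
    Measurable fun ω => S.sup fun i => g i ω := by
  classical
  induction S using Finset.induction_on with
  | empty => simpa using measurable_const
  | insert _ _ ha ih =>
    simp only [Finset.sup_insert]
    exact (measurable_of_countable (fun p : ℕ × ℕ => p.1 ⊔ p.2)).comp
      ((hg _).prodMk ih)

/-- Corollary to the refined BRS-inequality: with `p_n = P(N(n,s) < n)`,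
`E[N(n,s)] ≤ p_n·(∑ k, F k t − (s − E[S_{A(n,s)}])/t) + n·(1 − p_n)`. -/
theorem brs_inequality_corollary
    {Ω : Type*} [MeasureSpace Ω] [IsProbabilityMeasure (ℙ : Measure Ω)]
    (n : ℕ) (s t : ℝ) (hs : 0 < s) (ht : 0 < t)
    (X : Fin n → Ω → ℝ) (hXmeas : ∀ k, Measurable (X k))
    (hXpos : ∀ k ω, 0 < X k ω)
    (F : Fin n → ℝ → ℝ)
    (hF : ∀ k x, F k x = ((Measure.map (X k) ℙ) (Iic x)).toReal)
    (hBRS : ∑ k : Fin n, ∫ x in Ioc (0:ℝ) t, x ∂(Measure.map (X k) ℙ) = s)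
    (N : Ω → ℕ)
    (hN : ∀ ω, N ω = ((Finset.univ.powerset.filter
      (fun A : Finset (Fin n) => ∑ i ∈ A, X i ω ≤ s)).sup Finset.card))
    (A : Ω → Finset (Fin n))
    (hAcard : ∀ ω, (A ω).card = N ω)
    (hAsum : ∀ ω, ∑ i ∈ A ω, X i ω ≤ s)
    (hAinit : ∀ ω, ∀ i ∈ A ω, ∀ j,
      (X j ω < X i ω ∨ (X j ω = X i ω ∧ j < i)) → j ∈ A ω) :
    ∫ ω, (N ω : ℝ) ≤
      (ℙ {ω | N ω < n}).toReal *
        ((∑ k : Fin n, F k t) - (s - ∫ ω, ∑ i ∈ A ω, X i ω) / t)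
      + (n : ℝ) * (1 - (ℙ {ω | N ω < n}).toReal) := by
  -- basic facts about N
  have hNle : ∀ ω, N ω ≤ n := by
    intro ω; rw [hN]
    refine Finset.sup_le fun B _ => ?_
    simpa using Finset.card_le_univ B
  have hNsup : ∀ ω, N ω = Finset.univ.powerset.sup
      (fun B : Finset (Fin n) => if ∑ i ∈ B, X i ω ≤ s then B.card else 0) := by
    intro ω; rw [hN]
    apply le_antisymm
    · refine Finset.sup_le fun B hB => ?_
      rw [Finset.mem_filter] at hB
      have := Finset.le_sup
        (f := fun B : Finset (Fin n) => if ∑ i ∈ B, X i ω ≤ s then B.card else 0) hB.1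
      simpa [if_pos hB.2] using this
    · refine Finset.sup_le fun B hB => ?_
      by_cases h : ∑ i ∈ B, X i ω ≤ s
      · simpa [h] using Finset.le_sup (f := Finset.card) (Finset.mem_filter.2 ⟨hB, h⟩)
      · simp [h]
  have hNmeas : Measurable N := by
    have hm : Measurable fun ω => Finset.univ.powerset.sup
        (fun B : Finset (Fin n) => if ∑ i ∈ B, X i ω ≤ s then B.card else 0) :=
      brs_measurable_sup _ _ fun B => Measurable.ite
        (measurableSet_le (Finset.measurable_sum _ fun i _ => hXmeas i) measurable_const)
        measurable_const measurable_const
    have heq : N = fun ω => Finset.univ.powerset.sup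
        (fun B : Finset (Fin n) => if ∑ i ∈ B, X i ω ≤ s then B.card else 0) :=
      funext hNsup
    rw [heq]; exact hm
  -- characterization of A ω
  have hAeq : ∀ (ω : Ω) (B : Finset (Fin n)),
      A ω = B ↔ (N ω = B.card ∧ ∀ i ∈ B, ∀ j,
        (X j ω < X i ω ∨ (X j ω = X i ω ∧ j < i)) → j ∈ B) := by
    intro ω B
    constructor
    · rintro rfl; exact ⟨(hAcard ω).symm, hAinit ω⟩
    · rintro ⟨hcard, hdcl⟩
      refine brs_initseg_unique
        (r := fun a b => X a ω < X b ω ∨ (X a ω = X b ω ∧ a < b)) ?_ ?_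
        (hAinit ω) hdcl ((hAcard ω).trans hcard)
      · intro i j hij
        rcases lt_trichotomy (X i ω) (X j ω) with h | h | h
        · exact Or.inl (Or.inl h)
        · rcases hij.lt_or_gt with h' | h'
          · exact Or.inl (Or.inr ⟨h, h'⟩)
          · exact Or.inr (Or.inr ⟨h.symm, h'⟩)
        · exact Or.inr (Or.inl h)
      · rintro i j (h | ⟨he, hl⟩) (h' | ⟨he', hl'⟩)
        · exact absurd h' (lt_asymm h)
        · exact lt_irrefl _ (he' ▸ h)
        · exact lt_irrefl _ (he ▸ h')
        · exact absurd hl' (lt_asymm hl)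
  -- measurability of the level sets of A
  have hAsetmeas : ∀ B : Finset (Fin n), MeasurableSet {ω | A ω = B} := by
    intro B
    have hrw : {ω | A ω = B} = {ω | N ω = B.card} ∩ ⋂ i, ⋂ j,
        {ω | i ∈ B → ((X j ω < X i ω ∨ (X j ω = X i ω ∧ j < i)) → j ∈ B)} := by
      ext ω
      simp only [Set.mem_inter_iff, Set.mem_iInter, Set.mem_setOf_eq, hAeq ω B]
      constructor
      · rintro ⟨h1, h2⟩; exact ⟨h1, fun i j hi hc => h2 i hi j hc⟩
      · rintro ⟨h1, h2⟩; exact ⟨h1, fun i hi j hc => h2 i j hi hc⟩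
    rw [hrw]
    refine MeasurableSet.inter (hNmeas (measurableSet_singleton _))
      (MeasurableSet.iInter fun i => MeasurableSet.iInter fun j => ?_)
    by_cases hiB : i ∈ B
    · by_cases hjB : j ∈ B
      · simp [hiB, hjB]
      · have hrw2 : {ω : Ω | i ∈ B →
            ((X j ω < X i ω ∨ (X j ω = X i ω ∧ j < i)) → j ∈ B)}
            = ({ω | X j ω < X i ω} ∪ {ω | X j ω = X i ω ∧ j < i})ᶜ := by
          ext ω; simp [hiB, hjB, not_or]
        rw [hrw2]
        refine (MeasurableSet.union (measurableSet_lt (hXmeas j) (hXmeas i)) ?_).compl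
        by_cases hji : j < i
        · simpa [hji] using measurableSet_eq_fun (hXmeas j) (hXmeas i)
        · simp [hji]
    · simp [hiB]
  -- measurability and integrability of S_A
  have hSAmeas : Measurable fun ω => ∑ i ∈ A ω, X i ω := by
    have hrep : (fun ω => ∑ i ∈ A ω, X i ω)
        = fun ω => ∑ B ∈ (Finset.univ : Finset (Fin n)).powerset,
            if A ω = B then ∑ i ∈ B, X i ω else 0 := by
      funext ω
      rw [Finset.sum_ite_eq]
      simp
    rw [hrep]
    exact Finset.measurable_sum _ fun B _ => Measurable.ite (hAsetmeas B)
      (Finset.measurable_sum _ fun i _ => hXmeas i) measurable_const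
  have hIntSA : Integrable (fun ω => ∑ i ∈ A ω, X i ω) ℙ := by
    refine (integrable_const s).mono' hSAmeas.aestronglyMeasurable
      (ae_of_all _ fun ω => ?_)
    have h0 : (0:ℝ) ≤ ∑ i ∈ A ω, X i ω := Finset.sum_nonneg fun i _ => (hXpos i ω).le
    rw [Real.norm_eq_abs, abs_of_nonneg h0]; exact hAsum ω
  have hIntN : Integrable (fun ω => (N ω : ℝ)) ℙ := by
    refine (integrable_const (n:ℝ)).mono' ?_ (ae_of_all _ fun ω => ?_)
    · exact ((measurable_of_countable (fun m : ℕ => (m:ℝ))).comp hNmeas).aestronglyMeasurable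
    · rw [Real.norm_eq_abs, abs_of_nonneg (by positivity)]
      exact_mod_cast hNle ω
  -- the two indicator sums
  have hf1meas : ∀ k : Fin n,
      Measurable fun ω => Set.indicator (Iic t) (fun _ => (1:ℝ)) (X k ω) :=
    fun k => (measurable_const.indicator measurableSet_Iic).comp (hXmeas k)
  have hf2meas : ∀ k : Fin n,
      Measurable fun ω => Set.indicator (Ioc (0:ℝ) t) id (X k ω) :=
    fun k => (measurable_id.indicator measurableSet_Ioc).comp (hXmeas k)
  have hIntf1k : ∀ k : Fin n,
      Integrable (fun ω => Set.indicator (Iic t) (fun _ => (1:ℝ)) (X k ω)) ℙ := by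
    intro k
    refine (integrable_const (1:ℝ)).mono' (hf1meas k).aestronglyMeasurable
      (ae_of_all _ fun ω => ?_)
    by_cases h : X k ω ∈ Iic t <;> simp [Set.indicator_apply, h]
  have hIntf2k : ∀ k : Fin n,
      Integrable (fun ω => Set.indicator (Ioc (0:ℝ) t) id (X k ω)) ℙ := by
    intro k
    refine (integrable_const t).mono' (hf2meas k).aestronglyMeasurable
      (ae_of_all _ fun ω => ?_)
    by_cases h : X k ω ∈ Ioc (0:ℝ) t
    · rw [Set.indicator_of_mem h]
      simp only [id_eq]
      rw [Real.norm_eq_abs, abs_of_pos h.1]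
      exact h.2
    · rw [Set.indicator_of_notMem h]; simp [ht.le]
  have hIntf1 : Integrable
      (fun ω => ∑ k : Fin n, Set.indicator (Iic t) (fun _ => (1:ℝ)) (X k ω)) ℙ :=
    integrable_finset_sum _ fun k _ => hIntf1k k
  have hIntf2 : Integrable
      (fun ω => ∑ k : Fin n, Set.indicator (Ioc (0:ℝ) t) id (X k ω)) ℙ :=
    integrable_finset_sum _ fun k _ => hIntf2k k
  -- integrals of the indicator sums
  have hEf1 : ∫ ω, (∑ k : Fin n, Set.indicator (Iic t) (fun _ => (1:ℝ)) (X k ω))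
      = ∑ k : Fin n, F k t := by
    rw [integral_finset_sum _ fun k _ => hIntf1k k]
    refine Finset.sum_congr rfl fun k _ => ?_
    have hpre : (fun ω => Set.indicator (Iic t) (fun _ => (1:ℝ)) (X k ω))
        = Set.indicator (X k ⁻¹' Iic t) (fun _ => (1:ℝ)) := by
      funext ω
      by_cases h : X k ω ∈ Iic t <;>
        simp [Set.indicator_apply, h, Set.mem_preimage]
    rw [hpre, integral_indicator_const (1:ℝ) ((hXmeas k) measurableSet_Iic),
      smul_eq_mul, mul_one, hF, Measure.map_apply (hXmeas k) measurableSet_Iic]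
    rfl
  have hEf2 : ∫ ω, (∑ k : Fin n, Set.indicator (Ioc (0:ℝ) t) id (X k ω)) = s := by
    rw [integral_finset_sum _ fun k _ => hIntf2k k, ← hBRS]
    refine Finset.sum_congr rfl fun k _ => ?_
    have hmap := integral_map (μ := ℙ) (φ := X k) (hXmeas k).aemeasurable
      (f := (Ioc (0:ℝ) t).indicator id)
      ((measurable_id.indicator measurableSet_Ioc).aestronglyMeasurable)
    rw [← hmap, integral_indicator measurableSet_Ioc]
    simp [id_eq]
  -- the pointwise inequality
  have hpoint : ∀ ω, (N ω : ℝ) ≤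
      (∑ k : Fin n, Set.indicator (Iic t) (fun _ => (1:ℝ)) (X k ω))
      - ((∑ k : Fin n, Set.indicator (Ioc (0:ℝ) t) id (X k ω))
          - ∑ i ∈ A ω, X i ω) / t := by
    intro ω
    set B := A ω with hBdef
    set D := Finset.univ.filter (fun k : Fin n => X k ω ≤ t) with hDdef
    have hf1v : (∑ k : Fin n, Set.indicator (Iic t) (fun _ => (1:ℝ)) (X k ω))
        = (D.card : ℝ) := by
      simp [Set.indicator_apply, Set.mem_Iic, Finset.sum_boole, hDdef]
    have hf2v : (∑ k : Fin n, Set.indicator (Ioc (0:ℝ) t) id (X k ω))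
        = ∑ k ∈ D, X k ω := by
      rw [hDdef, Finset.sum_filter]
      refine Finset.sum_congr rfl fun k _ => ?_
      by_cases h : X k ω ≤ t <;>
        simp [Set.indicator_apply, Set.mem_Ioc, h, hXpos k ω]
    have hkey : (B.card : ℝ) * t + (∑ k ∈ D, X k ω) - (∑ i ∈ B, X i ω)
        ≤ (D.card : ℝ) * t := by
      have e1 : ∑ k ∈ D, X k ω = ∑ k ∈ D ∩ B, X k ω + ∑ k ∈ D \ B, X k ω :=
        (Finset.sum_inter_add_sum_sdiff D B _).symm
      have e2 : ∑ i ∈ B, X i ω = ∑ i ∈ B ∩ D, X i ω + ∑ i ∈ B \ D, X i ω :=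
        (Finset.sum_inter_add_sum_sdiff B D _).symm
      have e3 : ∑ k ∈ D ∩ B, X k ω = ∑ k ∈ B ∩ D, X k ω := by
        rw [Finset.inter_comm]
      have c1 : (D.card : ℝ) = ((D ∩ B).card : ℝ) + ((D \ B).card : ℝ) := by
        exact_mod_cast (Finset.card_inter_add_card_sdiff D B).symm
      have c2 : (B.card : ℝ) = ((B ∩ D).card : ℝ) + ((B \ D).card : ℝ) := by
        exact_mod_cast (Finset.card_inter_add_card_sdiff B D).symm
      have c3 : ((D ∩ B).card : ℝ) = ((B ∩ D).card : ℝ) := by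
        rw [Finset.inter_comm]
      have b1 : ∑ k ∈ D \ B, X k ω ≤ ((D \ B).card : ℝ) * t := by
        have := Finset.sum_le_card_nsmul (D \ B) (fun k => X k ω) t
          (fun x hx => by
            have hxD := (Finset.mem_sdiff.1 hx).1
            exact (Finset.mem_filter.1 hxD).2)
        simpa [nsmul_eq_mul] using this
      have b2 : ((B \ D).card : ℝ) * t ≤ ∑ k ∈ B \ D, X k ω := by
        have := Finset.card_nsmul_le_sum (B \ D) (fun k => X k ω) t
          (fun x hx => by
            have hxD := (Finset.mem_sdiff.1 hx).2
            have hnot : ¬ X x ω ≤ t := fun hc =>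
              hxD (Finset.mem_filter.2 ⟨Finset.mem_univ x, hc⟩)
            linarith [not_le.1 hnot])
        simpa [nsmul_eq_mul] using this
      have e1' : ∑ k ∈ D, X k ω = ∑ k ∈ B ∩ D, X k ω + ∑ k ∈ D \ B, X k ω := by
        rw [e1, e3]
      have c1' : (D.card : ℝ) = ((B ∩ D).card : ℝ) + ((D \ B).card : ℝ) := by
        rw [c1, c3]
      rw [e1', e2, c1', c2]
      linarith [b1, b2]
    have hNcast : (N ω : ℝ) = (B.card : ℝ) := by
      exact_mod_cast congrArg (fun m : ℕ => (m:ℝ)) (hAcard ω).symm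
    have hdiv : ((∑ k : Fin n, Set.indicator (Ioc (0:ℝ) t) id (X k ω))
        - ∑ i ∈ B, X i ω) / t
        ≤ (∑ k : Fin n, Set.indicator (Iic t) (fun _ => (1:ℝ)) (X k ω)) - (N ω : ℝ) := by
      rw [div_le_iff₀ ht, hf1v, hf2v, hNcast]
      nlinarith [hkey]
    linarith [hdiv]
  -- integrate the pointwise inequality
  have hle1 : ∫ ω, (N ω : ℝ) ≤
      ∫ ω, ((∑ k : Fin n, Set.indicator (Iic t) (fun _ => (1:ℝ)) (X k ω))
        - ((∑ k : Fin n, Set.indicator (Ioc (0:ℝ) t) id (X k ω))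
            - ∑ i ∈ A ω, X i ω) / t) :=
    integral_mono hIntN (hIntf1.sub ((hIntf2.sub hIntSA).div_const t)) hpoint
  have hval : ∫ ω, ((∑ k : Fin n, Set.indicator (Iic t) (fun _ => (1:ℝ)) (X k ω))
        - ((∑ k : Fin n, Set.indicator (Ioc (0:ℝ) t) id (X k ω))
            - ∑ i ∈ A ω, X i ω) / t)
      = (∑ k : Fin n, F k t) - (s - ∫ ω, ∑ i ∈ A ω, X i ω) / t := by
    have hintsub : Integrable (fun ω =>
        (∑ k : Fin n, Set.indicator (Ioc (0:ℝ) t) id (X k ω))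
          - ∑ i ∈ A ω, X i ω) ℙ := by exact hIntf2.sub hIntSA
    have hintdiv : Integrable (fun ω =>
        ((∑ k : Fin n, Set.indicator (Ioc (0:ℝ) t) id (X k ω))
          - ∑ i ∈ A ω, X i ω) / t) ℙ := by exact hintsub.div_const t
    rw [integral_sub hIntf1 hintdiv, integral_div,
      integral_sub hIntf2 hIntSA, hEf1, hEf2]
  have hRle : ∫ ω, (N ω : ℝ) ≤
      (∑ k : Fin n, F k t) - (s - ∫ ω, ∑ i ∈ A ω, X i ω) / t := by
    rw [← hval]; exact hle1
  -- the RHS of the refined inequality is at most n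
  have hSAle : ∫ ω, ∑ i ∈ A ω, X i ω ≤ s := by
    have := integral_mono hIntSA (integrable_const s) hAsum
    simpa using this
  have hF1 : ∀ k : Fin n, F k t ≤ 1 := by
    intro k
    rw [hF, Measure.map_apply (hXmeas k) measurableSet_Iic]
    simpa using ENNReal.toReal_mono ENNReal.one_ne_top prob_le_one
  have hRn : (∑ k : Fin n, F k t) - (s - ∫ ω, ∑ i ∈ A ω, X i ω) / t ≤ (n:ℝ) := by
    have h1 : ∑ k : Fin n, F k t ≤ (n:ℝ) := by
      calc ∑ k : Fin n, F k t ≤ ∑ _k : Fin n, (1:ℝ) :=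
            Finset.sum_le_sum fun k _ => hF1 k
        _ = n := by simp
    have h3 : 0 ≤ (s - ∫ ω, ∑ i ∈ A ω, X i ω) / t :=
      div_nonneg (by linarith) ht.le
    linarith
  -- conclude
  have hp0 : (0:ℝ) ≤ (ℙ {ω | N ω < n}).toReal := ENNReal.toReal_nonneg
  have hp1 : (ℙ {ω | N ω < n}).toReal ≤ 1 := by
    simpa using ENNReal.toReal_mono ENNReal.one_ne_top prob_le_one
  set p := (ℙ {ω | N ω < n}).toReal
  set R := (∑ k : Fin n, F k t) - (s - ∫ ω, ∑ i ∈ A ω, X i ω) / t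
  have key : 0 ≤ (1 - p) * ((n:ℝ) - R) :=
    mul_nonneg (by linarith) (by linarith)
  nlinarith [key, hRle]
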